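/- Let t ≥ 1 and δ > 0, and let G be a graph with no odd cycle of length at most 2t+5 and minimum degree at least δ|V(G)|. Then G has a graph homomorphism to a graph Γ with no odd cycle of length at most 2t+1 and with |V(Γ)| ≤ (t+1)^{2/δ}. -/

import Mathlib

open SimpleGraph

private lemma aux_loop_path_length {V : Type*} {G : SimpleGraph V} {u : V}
    (p : G.Walk u u) (hp : p.IsPath) : p.length = 0 := by
  cases p with
  | nil => rfl
  | cons h r =>
    rw [Walk.cons_isPath_iff] at hp
    exact absurd r.end_mem_support hp.2

private lemma aux_first_edge {V : Type*} {G : SimpleGraph V} {v y x : V}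
    (q : G.Walk v y) (hq : q.IsPath) (he : s(v, x) ∈ q.edges) :
    ∃ (ha : G.Adj v x) (q' : G.Walk x y), q = Walk.cons ha q' := by
  cases q with
  | nil => simp at he
  | cons h r =>
    rw [Walk.edges_cons, List.mem_cons] at he
    rcases he with he | he
    · rw [Sym2.eq_iff] at he
      rcases he with ⟨-, rfl⟩ | ⟨h1, h2⟩
      · exact ⟨h, r, rfl⟩
      · subst h1
        exact (G.loopless.irrefl _ h).elim
    · have hv := r.fst_mem_support_of_mem_edges he
      rw [Walk.cons_isPath_iff] at hq
      exact absurd hv hq.2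

private lemma aux_split {V : Type*} {G : SimpleGraph V} {x v : V}
    (q2 : G.Walk x v) (hx : x ∈ q2.support.tail) :
    ∃ (c : G.Walk x x) (r2 : G.Walk x v), 1 ≤ c.length ∧ c.length + r2.length = q2.length := by
  classical
  cases q2 with
  | nil => simp [Walk.support_nil] at hx
  | cons h r =>
    rw [Walk.support_cons] at hx
    have hx' : x ∈ r.support := by simpa using hx
    refine ⟨Walk.cons h (r.takeUntil x hx'), r.dropUntil x hx',
      by rw [Walk.length_cons]; omega, ?_⟩
    have hlen := congrArg Walk.length (r.take_spec hx')
    rw [Walk.length_append] at hlen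
    rw [Walk.length_cons, Walk.length_cons]
    omega

private lemma aux_odd_cycle {V : Type*} {G : SimpleGraph V} :
    ∀ (N : ℕ) {v : V} (w : G.Walk v v), w.length ≤ N → Odd w.length →
      ∃ (u : V) (c : G.Walk u u), c.IsCycle ∧ Odd c.length ∧ c.length ≤ w.length := by
  intro N
  induction N with
  | zero =>
    intro v w hle ho
    rw [Nat.le_zero] at hle
    rw [hle] at ho
    simp [Nat.odd_iff] at ho
  | succ N ih =>
    intro v w hle ho
    by_cases hnd : w.support.tail.Nodup
    · cases w with
      | nil => simp [Nat.odd_iff] at ho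
      | @cons _ y _ h q =>
        have hq : q.IsPath := by
          rw [Walk.isPath_def]
          simpa [Walk.support_cons] using hnd
        by_cases he : s(v, y) ∈ q.edges
        · exfalso
          have he' : s(v, y) ∈ q.reverse.edges := by
            rw [Walk.edges_reverse, List.mem_reverse]; exact he
          obtain ⟨ha, q', hq'⟩ := aux_first_edge q.reverse hq.reverse he'
          have hq'p : q'.IsPath := by
            have h2 := hq.reverse
            rw [hq', Walk.cons_isPath_iff] at h2
            exact h2.1
          have h0 : q'.length = 0 := aux_loop_path_length q' hq'p
          have hlenq : q.length = 1 := by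
            have h3 := congrArg Walk.length hq'
            rw [Walk.length_reverse, Walk.length_cons, h0] at h3
            omega
          rw [Walk.length_cons, hlenq] at ho
          simp [Nat.odd_iff] at ho
        · exact ⟨v, Walk.cons h q, (Walk.cons_isCycle_iff q h).mpr ⟨hq, he⟩, ho, le_rfl⟩
    · classical
      obtain ⟨x, hdup⟩ := List.exists_duplicate_iff_not_nodup.mpr hnd
      cases w with
      | nil =>
        rw [Walk.support_nil] at hdup
        simp only [List.tail_cons] at hdup
        exact hdup.elim_nil.elim
      | @cons _ y _ h q =>
        have hdx : List.Duplicate x q.support := by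
          rw [Walk.support_cons] at hdup
          simpa using hdup
        have hx1 : x ∈ q.support := hdx.mem
        have hcnt : 2 ≤ q.support.count x := List.duplicate_iff_two_le_count.mp hdx
        have hc1 : (q.takeUntil x hx1).support.count x = 1 :=
          q.count_support_takeUntil_eq_one hx1
        have hsupp : q.support = (q.takeUntil x hx1).support ++ (q.dropUntil x hx1).support.tail := by
          conv_lhs => rw [← q.take_spec hx1]
          rw [Walk.support_append]
        have hxq2 : x ∈ (q.dropUntil x hx1).support.tail := by
          rw [hsupp, List.count_append, hc1] at hcnt
          exact List.count_pos_iff.mp (by omega)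
        obtain ⟨c, r2, hc_len, hc_sum⟩ := aux_split (q.dropUntil x hx1) hxq2
        have hlen_q : (q.takeUntil x hx1).length + (q.dropUntil x hx1).length = q.length := by
          have h4 := congrArg Walk.length (q.take_spec hx1)
          rwa [Walk.length_append] at h4
        have hC2len : (r2.append (Walk.cons h (q.takeUntil x hx1))).length
            = r2.length + ((q.takeUntil x hx1).length + 1) := by
          rw [Walk.length_append, Walk.length_cons]
        rw [Walk.length_cons] at ho hle ⊢
        rw [Nat.odd_iff] at ho
        rcases Nat.even_or_odd c.length with hev | hod
        · rw [Nat.even_iff] at hev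
          have hodd2 : Odd (r2.append (Walk.cons h (q.takeUntil x hx1))).length := by
            rw [Nat.odd_iff, hC2len]; omega
          obtain ⟨u, cc, h1, h2, h3⟩ := ih (r2.append (Walk.cons h (q.takeUntil x hx1)))
            (by rw [hC2len]; omega) hodd2
          exact ⟨u, cc, h1, h2, by rw [hC2len] at h3; omega⟩
        · obtain ⟨u, cc, h1, h2, h3⟩ := ih c (by omega) hod
          exact ⟨u, cc, h1, h2, by omega⟩

/-- `G` contains no odd cycle of length at most `L`. -/
def OddGirthGT {V : Type*} (G : SimpleGraph V) (L : ℕ) : Prop :=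
  ∀ ⦃v : V⦄ (w : G.Walk v v), w.IsCycle → Odd w.length → L < w.length

private def profGraph (t : ℕ) (I : Type*) : SimpleGraph (I → Fin (t + 3)) where
  Adj p q := (∃ i, (p i : ℕ) ≤ 1) ∧ (∃ i, (q i : ℕ) ≤ 1) ∧
    ∀ i, ((p i : ℕ) + 1 = (q i : ℕ) ∨ (q i : ℕ) + 1 = (p i : ℕ) ∨
      ((p i : ℕ) = t + 2 ∧ (q i : ℕ) = t + 2))
  symm := by
    constructor
    rintro p q ⟨h1, h2, h3⟩
    exact ⟨h2, h1, fun i => by have := h3 i; omega⟩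
  loopless := by
    constructor
    rintro p ⟨⟨i, hi⟩, h2, h3⟩
    have := h3 i
    omega

private lemma profGraph_girth (t : ℕ) (I : Type*) :
    OddGirthGT (profGraph t I) (2 * t + 1) := by
  intro p w hcyc hodd
  by_contra hle
  push_neg at hle
  have h3 := hcyc.three_le_length
  obtain ⟨s, hs⟩ := hodd
  have hst : s ≤ t := by omega
  have hadj : ∀ j, j < w.length → (profGraph t I).Adj (w.getVert j) (w.getVert (j + 1)) :=
    fun j hj => w.adj_getVert_succ hj
  obtain ⟨i, hi⟩ := (hadj 0 (by omega)).1
  have hb0 : ((w.getVert 0) i : ℕ) ≤ 1 := hi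
  have hbL : ((w.getVert w.length) i : ℕ) = ((w.getVert 0) i : ℕ) := by
    rw [Walk.getVert_length, Walk.getVert_zero]
  have hC1 : ∀ j, j ≤ s → ((w.getVert j) i : ℕ) ≤ 1 + j := by
    intro j
    induction j with
    | zero => intro _; simpa using hb0
    | succ k ihk =>
      intro hk
      have h1 := ihk (by omega)
      have h2 := (hadj k (by omega)).2.2 i
      omega
  have hC2 : ∀ k, k ≤ s → ((w.getVert (w.length - k)) i : ℕ) ≤ 1 + k := by
    intro k
    induction k with
    | zero => intro _; rw [Nat.sub_zero, hbL]; omega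
    | succ k ihk =>
      intro hk
      have h1 := ihk (by omega)
      have h2 := (hadj (w.length - (k + 1)) (by omega)).2.2 i
      have heq : w.length - (k + 1) + 1 = w.length - k := by omega
      rw [heq] at h2
      omega
  have hall : ∀ j, j ≤ w.length → ((w.getVert j) i : ℕ) ≤ t + 1 := by
    intro j hj
    rcases le_or_gt j s with hcase | hcase
    · have := hC1 j hcase; omega
    · have h2 := hC2 (w.length - j) (by omega)
      rw [Nat.sub_sub_self hj] at h2
      omega
  have hpar : ∀ j, j ≤ w.length →
      (((w.getVert j) i : ℕ) + j) % 2 = ((w.getVert 0) i : ℕ) % 2 := by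
    intro j
    induction j with
    | zero => intro _; simp
    | succ k ihk =>
      intro hk
      have h1 := ihk (by omega)
      have h2 := (hadj k (by omega)).2.2 i
      have h4 := hall k (by omega)
      have h5 := hall (k + 1) hk
      omega
  have hfin := hpar w.length le_rfl
  rw [hbL] at hfin
  omega

theorem stmt_4 {V : Type*} [Fintype V] (t : ℕ) (ht : 1 ≤ t) (δ : ℝ) (hδ : 0 < δ)
    (G : SimpleGraph V) [DecidableRel G.Adj]
    (hfree : OddGirthGT G (2 * t + 5))
    (hdeg : ∀ v : V, δ * Fintype.card V ≤ G.degree v) :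
    ∃ (n : ℕ) (Γ : SimpleGraph (Fin n)),
      OddGirthGT Γ (2 * t + 1) ∧ (n : ℝ) ≤ ((t : ℝ) + 1) ^ (2 / δ) ∧
      Nonempty (G →g Γ) := by
  classical
  by_cases hV : IsEmpty V
  · refine ⟨0, ⊥, ?_, ?_, ?_⟩
    · intro v _w
      exact v.elim0
    · simp only [Nat.cast_zero]
      positivity
    · exact ⟨⟨fun v => (hV.false v).elim, fun {a b} hab => (hV.false a).elim⟩⟩
  · rw [not_isEmpty_iff] at hV
    have hn1 : 1 ≤ Fintype.card V := Fintype.card_pos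
    set n := Fintype.card V with hn
    -- closed balls
    set ball : V → Finset V := fun v => insert v (G.neighborFinset v) with hball
    have hball_card : ∀ v, (ball v).card = G.degree v + 1 := by
      intro v
      rw [hball]
      rw [Finset.card_insert_of_notMem (by simp)]
      rfl
    have hball_mem : ∀ u x : V, x ∈ ball u → ∃ p : G.Walk u x, p.length ≤ 1 := by
      intro u x hx
      rw [hball, Finset.mem_insert] at hx
      rcases hx with rfl | hx
      · exact ⟨Walk.nil, by simp⟩
      · exact ⟨Walk.cons ((G.mem_neighborFinset u x).mp hx) Walk.nil, by simp⟩
    -- maximal family with pairwise disjoint closed balls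
    obtain ⟨S, hSmem, hSmax⟩ := Finset.exists_max_image
      ((Finset.univ : Finset (Finset V)).filter
        (fun T => ∀ a ∈ T, ∀ b ∈ T, a ≠ b → Disjoint (ball a) (ball b)))
      Finset.card ⟨∅, by simp⟩
    rw [Finset.mem_filter] at hSmem
    have hSP := hSmem.2
    -- effective distance
    set Ds : V → V → ℕ := fun a c =>
      if G.Reachable a c then (if a = c then 2 else G.dist a c) else t + 3 with hDs
    have hDs_self : ∀ a, Ds a a = 2 := by
      intro a
      have hra : G.Reachable a a := Reachable.refl a
      simp [hDs, hra]
    -- covering property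
    have hcover : ∀ v : V, ∃ u ∈ S, Ds v u ≤ 2 := by
      intro v
      by_contra hcon
      push_neg at hcon
      have hvS : v ∉ S := fun hv => by
        have h2 := hcon v hv
        rw [hDs_self] at h2
        omega
      have hdisj : ∀ u ∈ S, Disjoint (ball v) (ball u) := by
        intro u hu
        rw [Finset.disjoint_left]
        intro a hav hau
        obtain ⟨p1, hp1⟩ := hball_mem v a hav
        obtain ⟨p2, hp2⟩ := hball_mem u a hau
        have hreach : G.Reachable v u := ⟨p1.append p2.reverse⟩
        have hdist : G.dist v u ≤ 2 :=
          le_trans (SimpleGraph.dist_le (p1.append p2.reverse))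
            (by rw [Walk.length_append, Walk.length_reverse]; omega)
        have h2 := hcon u hu
        simp only [hDs] at h2
        simp only [if_pos hreach] at h2
        split_ifs at h2 <;> omega
      have hins : ∀ a ∈ insert v S, ∀ b ∈ insert v S, a ≠ b → Disjoint (ball a) (ball b) := by
        intro a ha b hb hab
        rcases Finset.mem_insert.mp ha with ha' | ha' <;>
          rcases Finset.mem_insert.mp hb with hb' | hb'
        · exact absurd (ha'.trans hb'.symm) hab
        · subst ha'; exact hdisj b hb'
        · subst hb'; exact (hdisj a ha').symm
        · exact hSP a ha' b hb' hab
      have hmax := hSmax (insert v S) (Finset.mem_filter.mpr ⟨Finset.mem_univ _, hins⟩)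
      rw [Finset.card_insert_of_notMem hvS] at hmax
      omega
    -- size of S
    have hsum : ∑ u ∈ S, (ball u).card ≤ n := by
      rw [← Finset.card_biUnion hSP]
      exact Finset.card_le_univ _
    have hmδ : (S.card : ℝ) * δ ≤ 1 := by
      have h1 : (S.card : ℝ) * (δ * n + 1) ≤ (n : ℝ) := by
        calc (S.card : ℝ) * (δ * n + 1) = ∑ _u ∈ S, (δ * n + 1) := by
              rw [Finset.sum_const, nsmul_eq_mul]
          _ ≤ ∑ u ∈ S, ((ball u).card : ℝ) := by
              refine Finset.sum_le_sum fun u _ => ?_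
              rw [hball_card u]
              push_cast
              linarith [hdeg u]
          _ = ((∑ u ∈ S, (ball u).card : ℕ) : ℝ) := by push_cast; rfl
          _ ≤ (n : ℝ) := by exact_mod_cast hsum
      have hn1' : (1 : ℝ) ≤ (n : ℝ) := by exact_mod_cast hn1
      nlinarith [Nat.cast_nonneg (α := ℝ) S.card, hδ.le]
    -- symbols
    set sym : V → V → ℕ := fun v c => min (Ds v c - 1) (t + 2) with hsym
    have hsym_lt : ∀ v c, sym v c < t + 3 := by
      intro v c; simp only [hsym]; omega
    have hsym_small : ∀ v, ∃ u ∈ S, sym v u ≤ 1 := by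
      intro v
      obtain ⟨u, hu, h2⟩ := hcover v
      exact ⟨u, hu, by simp only [hsym]; omega⟩
    -- the R-relation for adjacent vertices
    have hsymR : ∀ {a b : V}, G.Adj a b → ∀ c : V,
        (sym a c + 1 = sym b c ∨ sym b c + 1 = sym a c ∨
          (sym a c = t + 2 ∧ sym b c = t + 2)) := by
      intro a b hab c
      by_cases hr : G.Reachable a c
      · have hrb : G.Reachable b c := (hab.symm.reachable).trans hr
        obtain ⟨p, hp⟩ := hr.exists_walk_length_eq_dist
        obtain ⟨q, hq⟩ := hrb.exists_walk_length_eq_dist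
        have hd1 : G.dist b c ≤ G.dist a c + 1 := by
          have h2 := SimpleGraph.dist_le (Walk.cons hab.symm p)
          rwa [Walk.length_cons, hp] at h2
        have hd2 : G.dist a c ≤ G.dist b c + 1 := by
          have h2 := SimpleGraph.dist_le (Walk.cons hab q)
          rwa [Walk.length_cons, hq] at h2
        have hne : ¬(G.dist a c = G.dist b c ∧ G.dist a c ≤ t + 2) := by
          rintro ⟨heq, hle2⟩
          have hW : Odd ((p.reverse.append (Walk.cons hab q)).length) := by
            rw [Walk.length_append, Walk.length_reverse, Walk.length_cons, hp, hq, ← heq]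
            exact ⟨G.dist a c, by ring⟩
          obtain ⟨u, cc, hcyc, hcodd, hcle⟩ :=
            aux_odd_cycle _ (p.reverse.append (Walk.cons hab q)) le_rfl hW
          have hgt := hfree cc hcyc hcodd
          rw [Walk.length_append, Walk.length_reverse, Walk.length_cons, hp, hq, ← heq] at hcle
          omega
        have hane : Ds a c = if a = c then 2 else G.dist a c := by
          rw [hDs]; simp [hr]
        have hbne : Ds b c = if b = c then 2 else G.dist b c := by
          rw [hDs]; simp [hrb]
        by_cases hac : a = c <;> by_cases hbc : b = c
        · exact absurd (hac.trans hbc.symm) hab.ne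
        · have h0 : G.dist a c = 0 := by rw [hac]; exact SimpleGraph.dist_self
          have hb0 : G.dist b c ≠ 0 := fun hh => hbc (hrb.dist_eq_zero_iff.mp hh)
          rw [if_pos hac] at hane
          rw [if_neg hbc] at hbne
          simp only [hsym]
          rw [hane, hbne]
          omega
        · have h0 : G.dist b c = 0 := by rw [hbc]; exact SimpleGraph.dist_self
          have ha0 : G.dist a c ≠ 0 := fun hh => hac (hr.dist_eq_zero_iff.mp hh)
          rw [if_pos hbc] at hbne
          rw [if_neg hac] at hane
          simp only [hsym]
          rw [hane, hbne]
          omega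
        · have ha0 : G.dist a c ≠ 0 := fun hh => hac (hr.dist_eq_zero_iff.mp hh)
          have hb0 : G.dist b c ≠ 0 := fun hh => hbc (hrb.dist_eq_zero_iff.mp hh)
          rw [if_neg hac] at hane
          rw [if_neg hbc] at hbne
          simp only [hsym]
          rw [hane, hbne]
          omega
      · have hrb : ¬G.Reachable b c := fun hh => hr ((hab.reachable).trans hh)
        have h1 : Ds a c = t + 3 := by rw [hDs]; simp [hr]
        have h2 : Ds b c = t + 3 := by rw [hDs]; simp [hrb]
        simp only [hsym]
        rw [h1, h2]
        omega
    -- the profile map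
    set φ : V → (↥S → Fin (t + 3)) := fun v i => ⟨sym v ↑i, hsym_lt v ↑i⟩ with hφ
    have hhom : ∀ {a b : V}, G.Adj a b → (profGraph t ↥S).Adj (φ a) (φ b) := by
      intro a b hab
      refine ⟨?_, ?_, fun i => hsymR hab ↑i⟩
      · obtain ⟨u, hu, h2⟩ := hsym_small a
        exact ⟨⟨u, hu⟩, h2⟩
      · obtain ⟨u, hu, h2⟩ := hsym_small b
        exact ⟨⟨u, hu⟩, h2⟩
    let e := Fintype.equivFin (↥S → Fin (t + 3))
    let Γ : SimpleGraph (Fin (Fintype.card (↥S → Fin (t + 3)))) :=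
      { Adj := fun x y => (profGraph t ↥S).Adj (e.symm x) (e.symm y)
        symm := ⟨fun x y h => (profGraph t ↥S).symm.symm _ _ h⟩
        loopless := ⟨fun x h => (profGraph t ↥S).loopless.irrefl _ h⟩ }
    refine ⟨Fintype.card (↥S → Fin (t + 3)), Γ, ?_, ?_, ?_⟩
    · intro v w hcyc hodd
      let g : Γ →g profGraph t ↥S := ⟨fun x => e.symm x, fun {x y} h => h⟩
      have hinj : Function.Injective g := e.symm.injective
      have h2 := profGraph_girth t ↥S (w.map g)
        ((Walk.map_isCycle_iff_of_injective hinj).mpr hcyc)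
        (by rw [Walk.length_map]; exact hodd)
      rwa [Walk.length_map] at h2
    · have hcardW : Fintype.card (↥S → Fin (t + 3)) = (t + 3) ^ S.card := by
        rw [Fintype.card_fun]
        simp
      rw [hcardW]
      have htR : (1 : ℝ) ≤ (t : ℝ) := by exact_mod_cast ht
      have ht1 : (1 : ℝ) ≤ (t : ℝ) + 1 := by linarith
      have hbase : ((t : ℝ) + 3) ≤ ((t : ℝ) + 1) ^ (2 : ℕ) := by nlinarith
      have h2m : ((2 * S.card : ℕ) : ℝ) ≤ 2 / δ := by
        rw [le_div_iff₀ hδ]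
        push_cast
        nlinarith [hmδ]
      calc (((t + 3) ^ S.card : ℕ) : ℝ) = ((t : ℝ) + 3) ^ S.card := by push_cast; ring
        _ ≤ (((t : ℝ) + 1) ^ (2 : ℕ)) ^ S.card := by
            exact pow_le_pow_left₀ (by positivity) hbase _
        _ = ((t : ℝ) + 1) ^ (2 * S.card : ℕ) := by rw [← pow_mul]
        _ = ((t : ℝ) + 1) ^ (((2 * S.card : ℕ) : ℝ)) := (Real.rpow_natCast _ _).symm
        _ ≤ ((t : ℝ) + 1) ^ (2 / δ) := Real.rpow_le_rpow_of_exponent_le ht1 h2m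
    · refine ⟨⟨fun v => e (φ v), fun {a b} hab => ?_⟩⟩
      show (profGraph t ↥S).Adj (e.symm (e (φ a))) (e.symm (e (φ b)))
      rw [Equiv.symm_apply_apply, Equiv.symm_apply_apply]
      exact hhom hab
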